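/- Let m be a positive integer, let T_m denote the m-th Chebyshev polynomial of the first kind (with T_0 = 1, T_1 = x, T_{n+1} = 2x·T_n − T_{n−1}), and let ε > 0. Then there are infinitely many positive integers n such that every prime divisor p of T_m(n) satisfies (p : ℝ) < (n : ℝ)^ε. -/

import Mathlib

open Polynomial Finset

noncomputable section Stmt17Aux
namespace Stmt17Aux

/-! ### Chebyshev values at 2 -/

def t (k : ℕ) : ℤ := (Polynomial.Chebyshev.T ℤ (k : ℤ)).eval 2

lemma t_zero : t 0 = 1 := by simp [t]
lemma t_one : t 1 = 2 := by simp [t, Polynomial.Chebyshev.T_one]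

lemma t_rec (k : ℕ) : t (k + 2) = 4 * t (k + 1) - t k := by
  unfold t
  have h : ((k + 2 : ℕ) : ℤ) = (k : ℤ) + 2 := by push_cast; ring
  rw [h, Polynomial.Chebyshev.T_add_two]
  have h1 : ((k + 1 : ℕ) : ℤ) = (k : ℤ) + 1 := by push_cast; ring
  rw [h1]
  simp [Polynomial.eval_mul]

lemma t_aux : ∀ k : ℕ, 2 ^ k ≤ t k ∧ 2 * t k ≤ t (k + 1) := by
  intro k
  induction k with
  | zero => simp [t_zero, t_one]
  | succ n ih =>
    obtain ⟨h1, h2⟩ := ih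
    have hpos : (1 : ℤ) ≤ t n := le_trans (one_le_pow₀ (by norm_num)) h1
    constructor
    · calc (2:ℤ) ^ (n+1) = 2 * 2 ^ n := by ring
        _ ≤ 2 * t n := by linarith
        _ ≤ t (n+1) := h2
    · rw [t_rec]
      linarith

lemma t_ge (k : ℕ) : 2 ^ k ≤ t k := (t_aux k).1

/-! ### The ring ℤ√3 -/

def a : ℤ√3 := ⟨2, 1⟩
def b : ℤ√3 := ⟨2, -1⟩

lemma ab : a * b = 1 := by
  ext <;> simp [a, b, Zsqrtd.re_mul, Zsqrtd.im_mul]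

lemma a_sq : a ^ 2 = 4 * a - 1 := by
  ext <;> simp [a, Zsqrtd.re_mul, Zsqrtd.im_mul, pow_two]

lemma b_sq : b ^ 2 = 4 * b - 1 := by
  ext <;> simp [b, Zsqrtd.re_mul, Zsqrtd.im_mul, pow_two]

lemma key : ∀ k : ℕ, ((2 * t k : ℤ) : ℤ√3) = a ^ k + b ^ k := by
  have H : ∀ k : ℕ, ((2 * t k : ℤ) : ℤ√3) = a ^ k + b ^ k ∧
      ((2 * t (k+1) : ℤ) : ℤ√3) = a ^ (k+1) + b ^ (k+1) := by
    intro k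
    induction k with
    | zero =>
      constructor
      · norm_num [t_zero]
      · rw [t_one]
        ext <;> simp [a, b]
    | succ n ih =>
      obtain ⟨ih1, ih2⟩ := ih
      refine ⟨ih2, ?_⟩
      have ha : a ^ (n + 2) = 4 * a ^ (n+1) - a ^ n := by
        have h : a ^ (n + 2) = a ^ n * a ^ 2 := by ring
        rw [h, a_sq]; ring
      have hb : b ^ (n + 2) = 4 * b ^ (n+1) - b ^ n := by
        have h : b ^ (n + 2) = b ^ n * b ^ 2 := by ring
        rw [h, b_sq]; ring
      rw [ha, hb, t_rec]
      have hc : ((2 * (4 * t (n+1) - t n) : ℤ) : ℤ√3)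
          = 4 * ((2 * t (n+1) : ℤ) : ℤ√3) - ((2 * t n : ℤ) : ℤ√3) := by
        push_cast; ring
      rw [hc, ih1, ih2]; ring
  exact fun k => (H k).1

/-! ### Cyclotomic evaluation bounds -/

lemma aeval_complex (x : ℝ) (Q : ℤ[X]) :
    ((Q.aeval x : ℝ) : ℂ) = Q.aeval (x : ℂ) := by
  calc ((Q.aeval x : ℝ) : ℂ) = Complex.ofRealHom (Q.eval₂ (algebraMap ℤ ℝ) x) := rfl
    _ = Q.eval₂ (Complex.ofRealHom.comp (algebraMap ℤ ℝ)) (Complex.ofRealHom x) :=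
        Polynomial.hom_eval₂ _ _ _ _
    _ = Q.aeval (x : ℂ) := by
        rw [Polynomial.aeval_def]
        congr 1

lemma cyclo_eval_c (d : ℕ) (hd : d ≠ 0) (z : ℂ) :
    (cyclotomic d ℤ).aeval z = ∏ μ ∈ primitiveRoots d ℂ, (z - μ) := by
  rw [Polynomial.aeval_def, Polynomial.eval₂_eq_eval_map]
  rw [show algebraMap ℤ ℂ = Int.castRingHom ℂ from rfl, Polynomial.map_cyclotomic_int]
  rw [cyclotomic_eq_prod_X_sub_primitiveRoots (Complex.isPrimitiveRoot_exp d hd)]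
  simp [Polynomial.eval_prod]

lemma mem_abs_one {d : ℕ} (hd : d ≠ 0) {μ : ℂ} (hμ : μ ∈ primitiveRoots d ℂ) :
    ‖μ‖ = 1 := by
  have h1 : μ ^ d = 1 := ((mem_primitiveRoots (Nat.pos_of_ne_zero hd)).mp hμ).pow_eq_one
  exact Complex.norm_eq_one_of_pow_eq_one h1 hd

lemma cyclo_bound (d : ℕ) (hd : d ≠ 0) (x : ℝ) :
    |(cyclotomic d ℤ).aeval x| ≤ (|x| + 1) ^ d.totient := by
  have h1 : |(cyclotomic d ℤ).aeval x| = ‖(((cyclotomic d ℤ).aeval x : ℝ) : ℂ)‖ := by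
    rw [Complex.norm_real, Real.norm_eq_abs]
  rw [h1, aeval_complex, cyclo_eval_c d hd]
  rw [Complex.norm_prod]
  have hcard : (primitiveRoots d ℂ).card = d.totient :=
    (Complex.isPrimitiveRoot_exp d hd).card_primitiveRoots
  rw [← hcard]
  calc ∏ μ ∈ primitiveRoots d ℂ, ‖(x:ℂ) - μ‖
      ≤ ∏ _μ ∈ primitiveRoots d ℂ, (|x| + 1) := by
        apply Finset.prod_le_prod
        · intro i _; exact norm_nonneg _
        · intro i hi
          calc ‖(x : ℂ) - i‖ ≤ ‖(x:ℂ)‖ + ‖i‖ :=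
                norm_sub_le _ _
            _ = |x| + 1 := by rw [Complex.norm_real, Real.norm_eq_abs, mem_abs_one hd hi]
    _ = (|x| + 1) ^ (primitiveRoots d ℂ).card := Finset.prod_const _

lemma cyclo_ne_zero (d : ℕ) (hd : d ≠ 0) (x : ℝ) (hx : |x| ≠ 1) :
    (cyclotomic d ℤ).aeval x ≠ 0 := by
  intro h
  have h2 : ((cyclotomic d ℤ).aeval (x:ℂ)) = 0 := by
    rw [← aeval_complex, h]; simp
  rw [cyclo_eval_c d hd] at h2
  obtain ⟨μ, hμ, he⟩ := Finset.prod_eq_zero_iff.mp h2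
  apply hx
  have hxx : (x : ℂ) = μ := by linear_combination he
  rw [← mem_abs_one hd hμ, ← hxx, Complex.norm_real, Real.norm_eq_abs]

/-! ### Embeddings of ℤ√3 into ℝ -/

lemma s3sq : Real.sqrt 3 * Real.sqrt 3 = ((3:ℤ) : ℝ) := by
  rw [Real.mul_self_sqrt (by norm_num : (0:ℝ) ≤ 3)]; norm_num

lemma s3sq' : (-Real.sqrt 3) * (-Real.sqrt 3) = ((3:ℤ) : ℝ) := by
  rw [neg_mul_neg]; exact s3sq

def f : ℤ√3 →+* ℝ := Zsqrtd.lift ⟨Real.sqrt 3, s3sq⟩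
def g : ℤ√3 →+* ℝ := Zsqrtd.lift ⟨-Real.sqrt 3, s3sq'⟩

lemma f_apply (z : ℤ√3) : f z = z.re + z.im * Real.sqrt 3 := rfl
lemma g_apply (z : ℤ√3) : g z = z.re + z.im * (-Real.sqrt 3) := rfl

lemma norm_eq_fg (z : ℤ√3) : (z.norm : ℝ) = f z * g z := by
  rw [f_apply, g_apply, Zsqrtd.norm_def]
  have h3 : Real.sqrt 3 * Real.sqrt 3 = 3 := by
    have := s3sq; push_cast at this; exact this
  push_cast
  linear_combination ((z.im : ℝ))^2 * h3

lemma hom_aeval (φ : ℤ√3 →+* ℝ) (x : ℤ√3) (Q : ℤ[X]) :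
    φ (Q.aeval x) = Q.aeval (φ x) := by
  calc φ (Q.aeval x) = φ (Q.eval₂ (algebraMap ℤ (ℤ√3)) x) := rfl
    _ = Q.eval₂ (φ.comp (algebraMap ℤ (ℤ√3))) (φ x) := Polynomial.hom_eval₂ _ _ _ _
    _ = Q.aeval (φ x) := by
        rw [Polynomial.aeval_def]; congr 1; exact RingHom.ext_int _ _

lemma fa : f a = 2 + Real.sqrt 3 := by rw [f_apply]; simp [a]
lemma ga : g a = 2 - Real.sqrt 3 := by rw [g_apply]; simp [a]; ring

lemma sqrt3_lt_two : Real.sqrt 3 < 2 := by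
  nlinarith [Real.sq_sqrt (by norm_num : (0:ℝ) ≤ 3), Real.sqrt_nonneg 3]

lemma sqrt3_gt_one : 1 < Real.sqrt 3 := by
  nlinarith [Real.sq_sqrt (by norm_num : (0:ℝ) ≤ 3), Real.sqrt_nonneg 3]

/-! ### Main bound on prime factors -/

lemma prime_bound (N' : ℕ) (hN : 0 < N') (p : ℕ) (hp : p.Prime)
    (hdvd : (p : ℤ) ∣ t N') : (p : ℝ) ≤ 6 ^ (Nat.totient (4 * N')) := by
  set M := 4 * N' with hMdef
  have hM : 0 < M := by omega
  have h1 : ((p:ℤ) : ℤ√3) ∣ a ^ M - 1 := by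
    have h0 : ((p:ℤ) : ℤ√3) ∣ ((2 * t N' : ℤ) : ℤ√3) :=
      map_dvd (Int.castRingHom (ℤ√3)) (Dvd.dvd.mul_left hdvd 2)
    rw [key N'] at h0
    have hAB : a ^ N' * b ^ N' = 1 := by rw [← mul_pow, ab, one_pow]
    have hfac : a ^ M - 1 = (a ^ N' + b ^ N') * (a ^ N' * ((a ^ N') ^ 2 - 1)) := by
      rw [hMdef, show 4 * N' = N' * 4 from mul_comm 4 N', pow_mul]
      linear_combination (1 - (a ^ N') ^ 2) * hAB
    rw [hfac]
    exact h0.mul_right _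
  have h3 : a ^ M - 1 = ∏ d ∈ M.divisors, (cyclotomic d ℤ).aeval a := by
    calc a ^ M - 1 = (Polynomial.aeval a) ((X : ℤ[X]) ^ M - 1) := by simp
      _ = (Polynomial.aeval a) (∏ d ∈ M.divisors, cyclotomic d ℤ) := by
          rw [prod_cyclotomic_eq_X_pow_sub_one hM ℤ]
      _ = ∏ d ∈ M.divisors, (cyclotomic d ℤ).aeval a := by rw [map_prod]
  have h5 : (p:ℤ) ∣ ∏ d ∈ M.divisors, Zsqrtd.norm ((cyclotomic d ℤ).aeval a) := by
    obtain ⟨c, hc⟩ := h1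
    have hnorm : Zsqrtd.norm (a ^ M - 1) =
        ∏ d ∈ M.divisors, Zsqrtd.norm ((cyclotomic d ℤ).aeval a) := by
      rw [h3]
      exact map_prod Zsqrtd.normMonoidHom _ _
    have hdd : (p:ℤ) * (p:ℤ) ∣ Zsqrtd.norm (a ^ M - 1) := by
      rw [hc, Zsqrtd.norm_mul, Zsqrtd.norm_intCast]
      exact Dvd.dvd.mul_right dvd_rfl _
    rw [hnorm] at hdd
    exact (dvd_mul_right (p:ℤ) (p:ℤ)).trans hdd
  obtain ⟨d, hdmem, hpd⟩ := (Nat.prime_iff_prime_int.mp hp).exists_mem_finset_dvd h5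
  obtain ⟨hdM, -⟩ := Nat.mem_divisors.mp hdmem
  have hd0 : d ≠ 0 := by
    intro h; rw [h] at hdM
    have := Nat.eq_zero_of_zero_dvd hdM
    omega
  set z := (cyclotomic d ℤ).aeval a with hz
  have hfz : f z = (cyclotomic d ℤ).aeval (f a) := hom_aeval f a _
  have hgz : g z = (cyclotomic d ℤ).aeval (g a) := hom_aeval g a _
  have habsfa : |f a| = 2 + Real.sqrt 3 := by
    rw [fa]; exact abs_of_nonneg (by nlinarith [sqrt3_gt_one])
  have habsga : |g a| = 2 - Real.sqrt 3 := by
    rw [ga]; exact abs_of_nonneg (by nlinarith [sqrt3_lt_two])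
  have hfz0 : f z ≠ 0 := by
    rw [hfz]; exact cyclo_ne_zero d hd0 _ (by rw [habsfa]; nlinarith [sqrt3_gt_one])
  have hgz0 : g z ≠ 0 := by
    rw [hgz]; exact cyclo_ne_zero d hd0 _ (by rw [habsga]; nlinarith [sqrt3_gt_one])
  have hNd0 : Zsqrtd.norm z ≠ 0 := by
    intro h
    have hfg := norm_eq_fg z
    rw [h] at hfg
    push_cast at hfg
    exact hfz0 (by rcases mul_eq_zero.mp hfg.symm with h' | h'; exact h'; exact absurd h' hgz0)
  have hple : (p:ℤ) ≤ |Zsqrtd.norm z| := Int.le_of_dvd (abs_pos.mpr hNd0) ((dvd_abs _ _).mpr hpd)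
  have hbound : |(Zsqrtd.norm z : ℝ)| ≤ 6 ^ d.totient := by
    rw [norm_eq_fg z, abs_mul]
    have b1 : |f z| ≤ (3 + Real.sqrt 3) ^ d.totient := by
      rw [hfz]
      calc |(cyclotomic d ℤ).aeval (f a)| ≤ (|f a| + 1) ^ d.totient := cyclo_bound d hd0 _
        _ = (3 + Real.sqrt 3) ^ d.totient := by rw [habsfa]; ring_nf
    have b2 : |g z| ≤ (3 - Real.sqrt 3) ^ d.totient := by
      rw [hgz]
      calc |(cyclotomic d ℤ).aeval (g a)| ≤ (|g a| + 1) ^ d.totient := cyclo_bound d hd0 _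
        _ = (3 - Real.sqrt 3) ^ d.totient := by rw [habsga]; ring_nf
    calc |f z| * |g z| ≤ (3 + Real.sqrt 3) ^ d.totient * (3 - Real.sqrt 3) ^ d.totient := by
          apply mul_le_mul b1 b2 (abs_nonneg _) (by positivity)
      _ = ((3 + Real.sqrt 3) * (3 - Real.sqrt 3)) ^ d.totient := (mul_pow _ _ _).symm
      _ = 6 ^ d.totient := by
          congr 1
          nlinarith [Real.mul_self_sqrt (by norm_num : (0:ℝ) ≤ 3)]
  have hφ : d.totient ≤ M.totient :=
    Nat.le_of_dvd (Nat.totient_pos.mpr hM) (Nat.totient_dvd_of_dvd hdM)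
  calc (p:ℝ) ≤ |(Zsqrtd.norm z : ℝ)| := by exact_mod_cast hple
    _ ≤ 6 ^ d.totient := hbound
    _ ≤ 6 ^ M.totient := by
        apply pow_le_pow_right₀ (by norm_num)
        exact hφ

/-! ### Choosing an index with small totient -/

lemma phi_small (m : ℕ) (hm : 0 < m) (c : ℝ) (hc : 0 < c) (B : ℕ) :
    ∃ j : ℕ, B ≤ j ∧ 0 < j ∧ ((4 * (m * j)).totient : ℝ) ≤ c * j := by
  classical
  set f : ℕ → ℝ := Set.indicator {p | Nat.Prime p} (fun q => 1 / q) with hf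
  have hnn : ∀ i, 0 ≤ f i := by
    intro i
    apply Set.indicator_nonneg
    intro q _
    positivity
  have htend : Filter.Tendsto (fun n => ∑ i ∈ range n, f i) Filter.atTop Filter.atTop :=
    (not_summable_iff_tendsto_nat_atTop_of_nonneg hnn).mp not_summable_one_div_on_primes
  set C := Real.log (4 * m / c) with hC
  obtain ⟨K, hK1, hK2⟩ :=
    ((htend.eventually_ge_atTop C).and (Filter.eventually_ge_atTop (max B 1))).exists
  set j := Nat.factorial K with hj
  have hj1 : 1 ≤ j := Nat.one_le_iff_ne_zero.mpr (Nat.factorial_ne_zero K)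
  have hBj : B ≤ j := le_trans (le_trans (le_max_left B 1) hK2) (Nat.self_le_factorial K)
  set n0 := 4 * (m * j) with hn0
  have hn0pos : 0 < n0 := by positivity
  have hsub : K.primesBelow ⊆ n0.primeFactors := by
    intro q hq
    rw [Nat.mem_primesBelow] at hq
    obtain ⟨hqK, hqp⟩ := hq
    refine Nat.mem_primeFactors.mpr ⟨hqp, ?_, hn0pos.ne'⟩
    exact Dvd.dvd.mul_left (Dvd.dvd.mul_left (Nat.dvd_factorial hqp.pos hqK.le) m) 4
  have hsum : ∑ i ∈ range K, f i = ∑ q ∈ K.primesBelow, ((q:ℝ))⁻¹ := by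
    rw [Nat.primesBelow, Finset.sum_filter]
    apply Finset.sum_congr rfl
    intro i _
    simp [hf, Set.indicator_apply, one_div]
  have h1 : ((n0.totient : ℝ)) = n0 * ∏ q ∈ n0.primeFactors, (1 - (q:ℝ)⁻¹) := by
    have h := Nat.totient_eq_mul_prod_factors n0
    have h2 := congrArg (fun x : ℚ => (x : ℝ)) h
    push_cast at h2
    exact_mod_cast h2
  have hfac_nonneg : ∀ q : ℕ, q.Prime → (0:ℝ) ≤ 1 - (q:ℝ)⁻¹ := by
    intro q hq
    have h2 : (2:ℝ) ≤ q := by exact_mod_cast hq.two_le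
    have hle : (q:ℝ)⁻¹ ≤ 1 := by
      rw [inv_le_one_iff₀]; right; linarith
    linarith
  have h2 : ∏ q ∈ n0.primeFactors, (1 - (q:ℝ)⁻¹) ≤ ∏ q ∈ K.primesBelow, (1 - (q:ℝ)⁻¹) := by
    rw [← Finset.prod_sdiff hsub]
    apply mul_le_of_le_one_left
    · apply Finset.prod_nonneg
      intro q hq
      exact hfac_nonneg q (Nat.prime_of_mem_primesBelow hq)
    · apply Finset.prod_le_one
      · intro q hq
        exact hfac_nonneg q (Nat.prime_of_mem_primeFactors (Finset.mem_sdiff.mp hq).1)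
      · intro q hq
        have hq0 : (0:ℝ) < q := by
          have := (Nat.prime_of_mem_primeFactors (Finset.mem_sdiff.mp hq).1).pos
          exact_mod_cast this
        nlinarith [inv_pos.mpr hq0]
  have h3 : ∏ q ∈ K.primesBelow, (1 - (q:ℝ)⁻¹) ≤ Real.exp (-(∑ q ∈ K.primesBelow, (q:ℝ)⁻¹)) := by
    rw [← Finset.sum_neg_distrib, Real.exp_sum]
    apply Finset.prod_le_prod
    · intro q hq
      exact hfac_nonneg q (Nat.prime_of_mem_primesBelow hq)
    · intro q hq
      have := Real.add_one_le_exp (-(q:ℝ)⁻¹)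
      linarith
  have h4 : Real.exp (-(∑ q ∈ K.primesBelow, (q:ℝ)⁻¹)) ≤ Real.exp (-C) := by
    apply Real.exp_le_exp.mpr
    rw [hsum] at hK1
    linarith
  have h5 : Real.exp (-C) = c / (4 * m) := by
    rw [hC, Real.exp_neg, Real.exp_log (by positivity)]
    rw [inv_div]
  refine ⟨j, hBj, hj1, ?_⟩
  have hchain : ((n0.totient : ℝ)) ≤ (n0 : ℝ) * (c / (4 * m)) := by
    rw [h1]
    apply mul_le_mul_of_nonneg_left _ (by positivity)
    calc ∏ q ∈ n0.primeFactors, (1 - (q:ℝ)⁻¹) ≤ _ := h2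
      _ ≤ _ := h3
      _ ≤ _ := h4
      _ = _ := h5
  calc ((n0.totient : ℝ)) ≤ (n0 : ℝ) * (c / (4 * m)) := hchain
    _ = c * j := by
        rw [hn0]
        push_cast
        field_simp

end Stmt17Aux
end Stmt17Aux

open Stmt17Aux in
theorem stmt_17 (m : ℕ) (hm : 0 < m) (ε : ℝ) (hε : 0 < ε) :
    ∀ N : ℕ, ∃ n : ℕ, N < n ∧
      ∀ p : ℕ, p.Prime → (p : ℤ) ∣ (Polynomial.Chebyshev.T ℤ (m : ℤ)).eval (n : ℤ) →
        (p : ℝ) < (n : ℝ) ^ ε := by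
  intro N
  obtain ⟨j, hBj, hjpos, hφ⟩ := phi_small m hm (ε/3) (by positivity) (N+1)
  set n : ℕ := (t j).toNat with hn
  have htj : (2:ℤ)^j ≤ t j := t_ge j
  have hnz : (n : ℤ) = t j := Int.toNat_of_nonneg (le_trans (by positivity) htj)
  have h2n : 2^j ≤ n := by
    have h := htj
    rw [← hnz] at h
    exact_mod_cast h
  have hNn : N < n := by
    have := Nat.lt_two_pow_self (n := j)
    omega
  refine ⟨n, hNn, ?_⟩
  intro p hp hdvd
  have heval : (Polynomial.Chebyshev.T ℤ (m:ℤ)).eval (n:ℤ) = t (m * j) := by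
    rw [hnz]
    simp only [t]
    rw [show ((m * j : ℕ) : ℤ) = (m:ℤ) * (j:ℤ) by push_cast; ring,
      Polynomial.Chebyshev.T_mul, Polynomial.eval_comp]
  rw [heval] at hdvd
  have hb := prime_bound (m*j) (by positivity) p hp hdvd
  -- numeric chain
  have h63 : (6:ℝ) ^ ((1:ℝ)/3) < 2 := by
    have hcube : ((6:ℝ) ^ ((1:ℝ)/3)) ^ (3:ℕ) = 6 := by
      rw [← Real.rpow_natCast ((6:ℝ) ^ ((1:ℝ)/3)) 3, ← Real.rpow_mul (by norm_num)]
      norm_num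
    by_contra hle
    push_neg at hle
    have h8 : (2:ℝ)^(3:ℕ) ≤ ((6:ℝ) ^ ((1:ℝ)/3))^(3:ℕ) :=
      pow_le_pow_left₀ (by norm_num) hle 3
    rw [hcube] at h8
    norm_num at h8
  have hjR : (0:ℝ) < j := by exact_mod_cast hjpos
  calc (p:ℝ) ≤ 6 ^ (Nat.totient (4 * (m * j))) := hb
    _ = (6:ℝ) ^ ((Nat.totient (4 * (m * j)) : ℝ)) := (Real.rpow_natCast 6 _).symm
    _ ≤ (6:ℝ) ^ ((ε/3) * j) := Real.rpow_le_rpow_of_exponent_le (by norm_num) hφ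
    _ = ((6:ℝ) ^ ((1:ℝ)/3)) ^ (ε * j) := by
        rw [show (ε/3) * (j:ℝ) = (1/3) * (ε * j) by ring, Real.rpow_mul (by norm_num)]
    _ < (2:ℝ) ^ (ε * j) := by
        apply Real.rpow_lt_rpow (Real.rpow_nonneg (by norm_num) _) h63
        positivity
    _ = ((2:ℝ) ^ (j:ℝ)) ^ ε := by
        rw [← Real.rpow_mul (by norm_num)]
        ring_nf
    _ ≤ (n:ℝ) ^ ε := by
        apply Real.rpow_le_rpow (Real.rpow_nonneg (by norm_num) _) _ hε.le
        rw [Real.rpow_natCast]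
        exact_mod_cast h2n
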